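/- Let q be a positive twice differentiable function on I and f₁ a differentiable function, and define g_± = ±iq − q'/(2q) − f₁/2 (complex-valued). Then g_+ and g_− both satisfy the Riccati equation g' + f₁g + f₀ + g² = 0 if and only if q satisfies −q''/(2q) + 3(q')²/(4q²) + f₀ − q² − f₁'/2 − f₁²/4 = 0. -/

import Mathlib

lemma keyp (Q Q' Q'' F F' F0 : ℂ) (hQ : Q ≠ 0) :
    Complex.I * Q' - (Q'' * (2 * Q) - Q' * (2 * Q')) / (2 * Q) ^ 2 - F' / 2
      + (F * (Complex.I * Q - Q' / (2 * Q) - F / 2) + F0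
        + (Complex.I * Q - Q' / (2 * Q) - F / 2) ^ 2)
    = -Q'' / (2 * Q) + 3 * Q' ^ 2 / (4 * Q ^ 2) + F0 - Q ^ 2 - F' / 2 - F ^ 2 / 4 := by
  ring_nf
  simp only [Complex.I_sq]
  field_simp
  ring

lemma keym (Q Q' Q'' F F' F0 : ℂ) (hQ : Q ≠ 0) :
    -(Complex.I * Q') - (Q'' * (2 * Q) - Q' * (2 * Q')) / (2 * Q) ^ 2 - F' / 2
      + (F * (-(Complex.I * Q) - Q' / (2 * Q) - F / 2) + F0
        + (-(Complex.I * Q) - Q' / (2 * Q) - F / 2) ^ 2)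
    = -Q'' / (2 * Q) + 3 * Q' ^ 2 / (4 * Q ^ 2) + F0 - Q ^ 2 - F' / 2 - F ^ 2 / 4 := by
  ring_nf
  simp only [Complex.I_sq]
  field_simp
  ring

open Complex in
/-- `g_± = ±iq - q'/(2q) - f₁/2` both satisfy the Riccati equation
`g' + f₁ g + f₀ + g² = 0` iff `q` satisfies
`-q''/(2q) + 3(q')²/(4q²) + f₀ - q² - f₁'/2 - f₁²/4 = 0`. -/
theorem stmt_8 (I : Set ℝ) (f₀ f₁ f₁' : ℝ → ℂ) (q q' q'' : ℝ → ℝ)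
    (hf₀ : ContinuousOn f₀ I)
    (hf₁ : ∀ t ∈ I, HasDerivAt f₁ (f₁' t) t)
    (hq : ∀ t ∈ I, 0 < q t)
    (hq' : ∀ t ∈ I, HasDerivAt q (q' t) t)
    (hq'' : ∀ t ∈ I, HasDerivAt q' (q'' t) t)
    (gp gm : ℝ → ℂ)
    (hgp : gp = fun t => Complex.I * (q t : ℂ) - (q' t : ℂ) / (2 * (q t : ℂ)) - f₁ t / 2)
    (hgm : gm = fun t => -(Complex.I * (q t : ℂ)) - (q' t : ℂ) / (2 * (q t : ℂ)) - f₁ t / 2) :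
    (∀ t ∈ I,
      HasDerivAt gp (-(f₁ t * gp t + f₀ t + (gp t) ^ 2)) t ∧
      HasDerivAt gm (-(f₁ t * gm t + f₀ t + (gm t) ^ 2)) t) ↔
    (∀ t ∈ I,
      -(q'' t : ℂ) / (2 * (q t : ℂ)) + 3 * (q' t : ℂ) ^ 2 / (4 * (q t : ℂ) ^ 2)
        + f₀ t - (q t : ℂ) ^ 2 - f₁' t / 2 - (f₁ t) ^ 2 / 4 = 0) := by
  subst hgp hgm
  refine forall₂_congr fun t ht => ?_
  have hqne : ((q t : ℂ)) ≠ 0 := by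
    exact_mod_cast (hq t ht).ne'
  have hden : (2 * (q t : ℂ)) ≠ 0 := by
    simp [hqne]
  have hqc : HasDerivAt (fun s => ((q s : ℂ))) ((q' t : ℂ)) t := (hq' t ht).ofReal_comp
  have hq'c : HasDerivAt (fun s => ((q' s : ℂ))) ((q'' t : ℂ)) t := (hq'' t ht).ofReal_comp
  have hdenD : HasDerivAt (fun s => 2 * ((q s : ℂ))) (2 * (q' t : ℂ)) t := hqc.const_mul 2
  have hdiv : HasDerivAt (fun s => ((q' s : ℂ)) / (2 * (q s : ℂ)))
      (((q'' t : ℂ) * (2 * (q t : ℂ)) - (q' t : ℂ) * (2 * (q' t : ℂ))) / (2 * (q t : ℂ)) ^ 2) t :=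
    hq'c.div hdenD hden
  have hIq : HasDerivAt (fun s => Complex.I * ((q s : ℂ))) (Complex.I * (q' t : ℂ)) t :=
    hqc.const_mul Complex.I
  have hf2 : HasDerivAt (fun s => f₁ s / 2) (f₁' t / 2) t := (hf₁ t ht).div_const 2
  have hDp : HasDerivAt (fun s => Complex.I * ((q s : ℂ)) - ((q' s : ℂ)) / (2 * (q s : ℂ)) - f₁ s / 2)
      (Complex.I * (q' t : ℂ)
        - ((q'' t : ℂ) * (2 * (q t : ℂ)) - (q' t : ℂ) * (2 * (q' t : ℂ))) / (2 * (q t : ℂ)) ^ 2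
        - f₁' t / 2) t := (hIq.sub hdiv).sub hf2
  have hDm : HasDerivAt
      (fun s => -(Complex.I * ((q s : ℂ))) - ((q' s : ℂ)) / (2 * (q s : ℂ)) - f₁ s / 2)
      (-(Complex.I * (q' t : ℂ))
        - ((q'' t : ℂ) * (2 * (q t : ℂ)) - (q' t : ℂ) * (2 * (q' t : ℂ))) / (2 * (q t : ℂ)) ^ 2
        - f₁' t / 2) t := (hIq.neg.sub hdiv).sub hf2
  have hkp := keyp (q t : ℂ) (q' t : ℂ) (q'' t : ℂ) (f₁ t) (f₁' t) (f₀ t) hqne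
  have hkm := keym (q t : ℂ) (q' t : ℂ) (q'' t : ℂ) (f₁ t) (f₁' t) (f₀ t) hqne
  constructor
  · rintro ⟨hp, -⟩
    have h := hp.unique hDp
    beta_reduce at h
    rw [← hkp, ← h]
    ring
  · intro hE
    constructor
    · have h : -(f₁ t * (Complex.I * (q t : ℂ) - (q' t : ℂ) / (2 * (q t : ℂ)) - f₁ t / 2)
          + f₀ t + (Complex.I * (q t : ℂ) - (q' t : ℂ) / (2 * (q t : ℂ)) - f₁ t / 2) ^ 2)
          = Complex.I * (q' t : ℂ)
            - ((q'' t : ℂ) * (2 * (q t : ℂ)) - (q' t : ℂ) * (2 * (q' t : ℂ))) / (2 * (q t : ℂ)) ^ 2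
            - f₁' t / 2 := by
        rw [← hkp] at hE
        linear_combination -hE
      rw [h]
      exact hDp
    · have h : -(f₁ t * (-(Complex.I * (q t : ℂ)) - (q' t : ℂ) / (2 * (q t : ℂ)) - f₁ t / 2)
          + f₀ t + (-(Complex.I * (q t : ℂ)) - (q' t : ℂ) / (2 * (q t : ℂ)) - f₁ t / 2) ^ 2)
          = -(Complex.I * (q' t : ℂ))
            - ((q'' t : ℂ) * (2 * (q t : ℂ)) - (q' t : ℂ) * (2 * (q' t : ℂ))) / (2 * (q t : ℂ)) ^ 2
            - f₁' t / 2 := by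
        rw [← hkm] at hE
        linear_combination -hE
      rw [h]
      exact hDm
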